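/- Let A be a left brace of cardinality p^n with p prime and p > n+1. Then for every natural number i, the subset p^i·A = {p^i·a : a ∈ A} is an ideal of A, and moreover p^i·A equals A^{∘p^i}, the subgroup of the multiplicative group (A,∘) generated by the p^i-th powers a^{∘p^i} for a ∈ A. -/

import Mathlib

class LeftBrace (A : Type*) extends AddCommGroup A where
  circ : A → A → A
  circ_assoc : ∀ a b c : A, circ (circ a b) c = circ a (circ b c)
  circ_zero : ∀ a : A, circ a 0 = a
  zero_circ : ∀ a : A, circ 0 a = a
  inv : A → A
  circ_inv : ∀ a : A, circ a (inv a) = 0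
  inv_circ : ∀ a : A, circ (inv a) a = 0
  circ_add : ∀ a b c : A, circ a (b + c) + a = circ a b + circ a c

namespace LeftBrace

variable {A : Type*} [LeftBrace A]

def star (a b : A) : A := circ a b - a - b

def subStarSet (S T : Set A) : AddSubgroup A :=
  AddSubgroup.closure {x | ∃ a ∈ S, ∃ b ∈ T, x = star a b}

def subStar (S T : AddSubgroup A) : AddSubgroup A := subStarSet (S : Set A) (T : Set A)

/-- `leftPow A m` is `A^{m+1}` of the left chain `A^1 = A`, `A^{i+1} = A * A^i`. -/
def leftPow (A : Type*) [LeftBrace A] : ℕ → AddSubgroup A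
  | 0 => ⊤
  | m + 1 => subStar ⊤ (leftPow A m)

def leftIdx (A : Type*) [LeftBrace A] (m : ℕ) : AddSubgroup A := leftPow A (m - 1)

/-- `rightPow A m` is `A^{(m+1)}` of the right chain `A^{(1)} = A`, `A^{(i+1)} = A^{(i)} * A`. -/
def rightPow (A : Type*) [LeftBrace A] : ℕ → AddSubgroup A
  | 0 => ⊤
  | m + 1 => subStar (rightPow A m) ⊤

def rightIdx (A : Type*) [LeftBrace A] (m : ℕ) : AddSubgroup A := rightPow A (m - 1)

def strongPow (A : Type*) [LeftBrace A] : ℕ → AddSubgroup A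
  | 0 => ⊤
  | m + 1 => ⨆ j : Fin (m + 1), subStar (strongPow A j) (strongPow A (m - j))
  termination_by m => m
  decreasing_by
  · exact j.isLt
  · exact Nat.lt_succ_of_le (Nat.sub_le m j)

def strongIdx (A : Type*) [LeftBrace A] (m : ℕ) : AddSubgroup A := strongPow A (m - 1)

/-- An ideal of a left brace, as a subset: closed under the additive group
operations, absorbing under `*` on both sides, and normal in `(A, ∘)`. -/
def IsIdeal (I : Set A) : Prop :=
  (0 : A) ∈ I ∧ (∀ x ∈ I, ∀ y ∈ I, x + y ∈ I) ∧ (∀ x ∈ I, -x ∈ I) ∧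
  (∀ a : A, ∀ i ∈ I, star a i ∈ I) ∧ (∀ a : A, ∀ i ∈ I, star i a ∈ I) ∧
  (∀ a : A, ∀ i ∈ I, circ (circ a i) (inv a) ∈ I)

/-- `circPow a m` is the product of `m` copies of `a` in the group `(A, ∘)`. -/
def circPow (a : A) : ℕ → A
  | 0 => 0
  | m + 1 => circ a (circPow a m)

/-- Membership in the subgroup of `(A, ∘)` generated by a subset. -/
inductive circClosure (S : Set A) : A → Prop
  | of : ∀ x ∈ S, circClosure S x
  | zero : circClosure S 0
  | mul : ∀ x y : A, circClosure S x → circClosure S y → circClosure S (circ x y)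
  | inv : ∀ x : A, circClosure S x → circClosure S (inv x)

end LeftBrace

namespace LeftBrace

variable {A : Type*} [LeftBrace A]

lemma circ_add' (a b c : A) : circ a (b + c) = circ a b + circ a c - a :=
  eq_sub_of_add_eq (circ_add a b c)

/-- λ_a as an additive hom. -/
def lam (a : A) : A →+ A where
  toFun b := circ a b - a
  map_zero' := by simp [circ_zero]
  map_add' b c := by rw [circ_add']; abel

lemma lam_apply (a b : A) : lam a b = circ a b - a := rfl

lemma star_eq (a b : A) : star a b = lam a b - b := rfl

/-- star a (·) as an additive hom. -/
def starHom (a : A) : A →+ A := lam a - AddMonoidHom.id A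

lemma starHom_apply (a b : A) : starHom a b = star a b := by
  simp [starHom, star_eq]

lemma star_add (a b c : A) : star a (b + c) = star a b + star a c := by
  rw [← starHom_apply, ← starHom_apply, ← starHom_apply, map_add]

lemma star_zero (a : A) : star a 0 = 0 := by
  rw [← starHom_apply]; exact map_zero _

lemma star_nsmul (a : A) (m : ℕ) (b : A) : star a (m • b) = m • star a b := by
  rw [← starHom_apply, map_nsmul, starHom_apply]

lemma star_neg (a b : A) : star a (-b) = - star a b := by
  rw [← starHom_apply, map_neg, starHom_apply]

lemma zero_star (b : A) : star 0 b = 0 := by simp [star, zero_circ]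

lemma circ_eq (a b : A) : circ a b = a + b + star a b := by
  simp only [star]; abel

lemma circ_neg (a b : A) : circ a (-b) = a + a - circ a b := by
  have h := circ_add a b (-b)
  rw [add_neg_cancel, circ_zero] at h
  rw [h]; abel

lemma circ_sub (a x y : A) : circ a (x - y) = circ a x + a - circ a y := by
  rw [sub_eq_add_neg, circ_add', circ_neg]; abel

lemma lam_circ (a b c : A) : lam (circ a b) c = lam a (lam b c) := by
  simp only [lam_apply]
  rw [circ_sub, circ_assoc]; abel

lemma lam_inv_cancel (u z : A) : lam u (lam (inv u) z) = z := by
  rw [← lam_circ, circ_inv]; simp [lam_apply, zero_circ]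

lemma circ_star (a u b : A) : star (circ a u) b = star a (star u b) + star a b + star u b := by
  have h : star (circ a u) b = lam a (lam u b) - b := by rw [star_eq, lam_circ]
  rw [h, star_eq a (star u b), star_eq u b, star_eq a b, map_sub]
  abel

end LeftBrace

namespace LeftBrace

variable {A : Type*} [LeftBrace A]

open Finset

/-- iterated star against a fixed left multiplier -/
def iterStar (a b : A) : ℕ → A
  | 0 => b
  | k + 1 => star a (iterStar a b k)

@[simp] lemma iterStar_zero (a b : A) : iterStar a b 0 = b := rfl
@[simp] lemma iterStar_succ (a b : A) (k : ℕ) :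
    iterStar a b (k + 1) = star a (iterStar a b k) := rfl

lemma pascal_sum (g : ℕ → A) (m : ℕ) :
    ∑ k ∈ Finset.range (m+1), (m+1).choose (k+1) • g k
    = g 0 + ∑ k ∈ Finset.range m, m.choose (k+1) • g k
        + ∑ k ∈ Finset.range m, m.choose (k+1) • g (k+1) := by
  have h1 : ∀ k, (m+1).choose (k+1) • g k
      = m.choose k • g k + m.choose (k+1) • g k := by
    intro k; rw [Nat.choose_succ_succ, add_nsmul]
  have e1 : ∑ k ∈ Finset.range (m+1), m.choose k • g k
      = (∑ k ∈ Finset.range m, m.choose (k+1) • g (k+1)) + g 0 := by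
    rw [Finset.sum_range_succ' (fun k => m.choose k • g k) m]
    simp only [Nat.choose_zero_right, one_smul]
  have e2 : ∑ k ∈ Finset.range (m+1), m.choose (k+1) • g k
      = ∑ k ∈ Finset.range m, m.choose (k+1) • g k := by
    rw [Finset.sum_range_succ]
    simp [Nat.choose_succ_self]
  simp only [h1, Finset.sum_add_distrib, e1, e2]
  abel

lemma star_sum (a : A) (s : Finset ℕ) (f : ℕ → A) :
    star a (∑ k ∈ s, f k) = ∑ k ∈ s, star a (f k) := by
  rw [← starHom_apply, map_sum]; simp only [starHom_apply]

lemma circPow_eq_sum (a : A) (m : ℕ) :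
    circPow a m = ∑ k ∈ Finset.range m, m.choose (k+1) • iterStar a a k := by
  induction m with
  | zero => simp [circPow]
  | succ m ih =>
    show circ a (circPow a m) = _
    rw [circ_eq, ih, pascal_sum (fun k => iterStar a a k) m]
    rw [star_sum]
    simp only [star_nsmul, ← iterStar_succ, iterStar_zero]
    all_goals abel

lemma star_circPow_eq_sum (a b : A) (m : ℕ) :
    star (circPow a m) b
    = ∑ k ∈ Finset.range m, m.choose (k+1) • iterStar a (star a b) k := by
  induction m with
  | zero => simp [circPow, zero_star]
  | succ m ih =>
    show star (circ a (circPow a m)) b = _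
    rw [circ_star, ih, pascal_sum (fun k => iterStar a (star a b) k) m]
    rw [star_sum]
    simp only [star_nsmul, ← iterStar_succ, iterStar_zero]
    all_goals abel

lemma star_mem_leftPow_succ (a : A) {x : A} {m : ℕ} (hx : x ∈ leftPow A m) :
    star a x ∈ leftPow A (m+1) := by
  apply AddSubgroup.subset_closure
  exact ⟨a, trivial, x, hx, rfl⟩

lemma leftPow_succ_le (m : ℕ) : leftPow A (m+1) ≤ leftPow A m := by
  induction m with
  | zero => exact le_top
  | succ m ih =>
    show subStar ⊤ (leftPow A (m+1)) ≤ _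
    rw [subStar, subStarSet, AddSubgroup.closure_le]
    rintro _ ⟨a, -, b, hb, rfl⟩
    exact star_mem_leftPow_succ a (ih hb)

lemma leftPow_antitone : Antitone (leftPow A) :=
  antitone_nat_of_succ_le leftPow_succ_le

lemma star_mem_leftPow (a : A) {x : A} {m : ℕ} (hx : x ∈ leftPow A m) :
    star a x ∈ leftPow A m := by
  cases m with
  | zero => trivial
  | succ m => exact star_mem_leftPow_succ a (leftPow_succ_le m hx)

lemma iterStar_mem {a b : A} {m : ℕ} (hb : b ∈ leftPow A m) (k : ℕ) :
    iterStar a b k ∈ leftPow A (m + k) := by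
  induction k with
  | zero => exact hb
  | succ k ih => exact star_mem_leftPow_succ a ih

end LeftBrace

namespace LeftBrace

variable {A : Type*} [LeftBrace A]

def CircG (A : Type*) := A

/-- The identity map `A → CircG A`. -/
def toC : A → CircG A := id

instance : Group (CircG A) where
  mul a b := toC (circ (A := A) a b)
  mul_assoc := circ_assoc (A := A)
  one := toC (0 : A)
  one_mul := zero_circ (A := A)
  mul_one := circ_zero (A := A)
  inv a := toC (inv (A := A) a)
  inv_mul_cancel := inv_circ (A := A)

lemma toC_circ (a b : A) : toC (circ a b) = toC a * toC b := rfl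
lemma toC_zero : toC (0 : A) = (1 : CircG A) := rfl

instance [Fintype A] : Finite (CircG A) := inferInstanceAs (Finite A)

lemma circPow_eq_pow (a : A) (m : ℕ) : toC (circPow a m) = (toC a) ^ m := by
  induction m with
  | zero => rw [pow_zero]; rfl
  | succ m ih =>
    show toC (circ a (circPow a m)) = _
    rw [toC_circ, ih, pow_succ']

lemma inv_eq_of_circ_eq_zero {a x : A} (h : circ a x = 0) : inv a = x := by
  have h2 := congrArg (circ (inv a)) h
  rw [← circ_assoc, inv_circ, zero_circ, circ_zero] at h2
  exact h2.symm

lemma circPow_card [Fintype A] (a : A) : circPow a (Nat.card A) = 0 := by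
  have : toC (circPow a (Nat.card A)) = 1 := by
    rw [circPow_eq_pow]
    have : Nat.card A = Nat.card (CircG A) := rfl
    rw [this, pow_card_eq_one']
  exact this

lemma inv_eq_circPow [Fintype A] (a : A) : inv a = circPow a (Nat.card A - 1) := by
  apply inv_eq_of_circ_eq_zero
  have h1 : 1 ≤ Nat.card A := Nat.one_le_iff_ne_zero.mpr (Nat.card_ne_zero.mpr ⟨⟨0⟩, inferInstance⟩)
  have : circ a (circPow a (Nat.card A - 1)) = circPow a (Nat.card A - 1 + 1) := rfl
  rw [this, Nat.sub_add_cancel h1, circPow_card]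

end LeftBrace

namespace LeftBrace

variable {A : Type*} [LeftBrace A]

lemma lam_eq_star_add (a x : A) : lam a x = star a x + x := by rw [star_eq]; abel

lemma exists_almost_fixed [Fintype A] {p n : ℕ} (hp : p.Prime)
    (hcard : Nat.card A = p ^ n) (F X : AddSubgroup A)
    (hF : ∀ (a : A), ∀ x ∈ F, star a x ∈ F)
    (hX : ∀ (a : A), ∀ x ∈ X, star a x ∈ X)
    (hXF : ¬ X ≤ F) :
    ∃ y ∈ X, y ∉ F ∧ ∀ a : A, star a y ∈ F := by
  haveI : Fact (Nat.Prime p) := ⟨hp⟩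
  have hlam : ∀ a : A, F ≤ AddSubgroup.comap (lam a) F := by
    intro a x hx
    simp only [AddSubgroup.mem_comap, lam_eq_star_add]
    exact F.add_mem (hF a x hx) hx
  let ql : A → (A ⧸ F) →+ (A ⧸ F) := fun a => QuotientAddGroup.map F F (lam a) (hlam a)
  have ql_mk : ∀ (a x : A), ql a (QuotientAddGroup.mk x) = QuotientAddGroup.mk (lam a x) :=
    fun a x => rfl
  set Xbar : AddSubgroup (A ⧸ F) := X.map (QuotientAddGroup.mk' F) with hXbar
  have hXbar_inv : ∀ (a : A), ∀ q ∈ Xbar, ql a q ∈ Xbar := by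
    rintro a q hq
    obtain ⟨x, hx, rfl⟩ := AddSubgroup.mem_map.mp hq
    refine AddSubgroup.mem_map.mpr ⟨lam a x, ?_, rfl⟩
    rw [lam_eq_star_add]
    exact X.add_mem (hX a x hx) hx
  letI : MulAction (CircG A) ↥Xbar :=
  { smul := fun a q => ⟨ql a q.1, hXbar_inv a q.1 q.2⟩
    one_smul := by
      rintro ⟨q, hq⟩
      apply Subtype.ext
      show ql (0 : A) q = q
      induction q using QuotientAddGroup.induction_on with
      | H z => rw [ql_mk]; congr 1; show circ 0 z - 0 = z; rw [zero_circ, sub_zero]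
    mul_smul := by
      rintro a b ⟨q, hq⟩
      apply Subtype.ext
      show ql (circ a b) q = ql a (ql b q)
      induction q using QuotientAddGroup.induction_on with
      | H z => rw [ql_mk]; exact congrArg (fun w : A => (w : A ⧸ F)) (lam_circ (A := A) a b z) }
  have hsmul_def : ∀ (a : A) (q : ↥Xbar), ((toC a • q : ↥Xbar) : A ⧸ F) = ql a q.1 :=
    fun a q => rfl
  have hGp : IsPGroup p (CircG A) := IsPGroup.of_card (n := n) hcard
  have hmod := hGp.card_modEq_card_fixedPoints (↥Xbar)
  have hdvd1 : Nat.card ↥Xbar ∣ p ^ n := by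
    calc Nat.card ↥Xbar ∣ Nat.card (A ⧸ F) := AddSubgroup.card_addSubgroup_dvd_card Xbar
    _ ∣ Nat.card A := Dvd.intro _ (AddSubgroup.card_eq_card_quotient_mul_card_addSubgroup F).symm
    _ = p ^ n := hcard
  obtain ⟨x0, hx0X, hx0F⟩ := SetLike.not_le_iff_exists.mp hXF
  have hx0bar : (QuotientAddGroup.mk' F) x0 ∈ Xbar := AddSubgroup.mem_map.mpr ⟨x0, hx0X, rfl⟩
  have hXbar_ne : Nat.card ↥Xbar ≠ 1 := by
    intro h1
    have hbot : Xbar = ⊥ := AddSubgroup.card_eq_one.mp h1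
    rw [hbot, AddSubgroup.mem_bot] at hx0bar
    exact hx0F ((QuotientAddGroup.eq_zero_iff x0).mp hx0bar)
  have hpXbar : p ∣ Nat.card ↥Xbar := by
    obtain ⟨k, -, hk⟩ := (Nat.dvd_prime_pow hp).mp hdvd1
    cases k with
    | zero => rw [pow_zero] at hk; exact absurd hk hXbar_ne
    | succ k => rw [hk]; exact dvd_pow_self p (Nat.succ_ne_zero k)
  have hzero_mem : (⟨0, Xbar.zero_mem⟩ : ↥Xbar) ∈ MulAction.fixedPoints (CircG A) ↥Xbar := by
    intro g
    apply Subtype.ext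
    show ql g (0 : A ⧸ F) = 0
    exact map_zero _
  haveI : Nonempty ↥(MulAction.fixedPoints (CircG A) ↥Xbar) := ⟨⟨_, hzero_mem⟩⟩
  have hfp_pos : 0 < Nat.card ↥(MulAction.fixedPoints (CircG A) ↥Xbar) := Nat.card_pos
  have hpfp : p ∣ Nat.card ↥(MulAction.fixedPoints (CircG A) ↥Xbar) :=
    Nat.modEq_zero_iff_dvd.mp ((hmod.symm).trans (Nat.modEq_zero_iff_dvd.mpr hpXbar))
  have h1fp : 1 < Nat.card ↥(MulAction.fixedPoints (CircG A) ↥Xbar) := by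
    have h2 := Nat.le_of_dvd hfp_pos hpfp
    have h3 := hp.two_le
    omega
  haveI := Finite.one_lt_card_iff_nontrivial.mp h1fp
  obtain ⟨b, hb⟩ := exists_ne (⟨⟨0, Xbar.zero_mem⟩, hzero_mem⟩ :
    ↥(MulAction.fixedPoints (CircG A) ↥Xbar))
  obtain ⟨⟨q, hqmem⟩, hqfix⟩ := b
  have hq_ne : q ≠ 0 := by
    intro h0
    apply hb
    apply Subtype.ext
    apply Subtype.ext
    exact h0
  obtain ⟨y, hyX, hyq⟩ := AddSubgroup.mem_map.mp hqmem
  refine ⟨y, hyX, ?_, ?_⟩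
  · intro hyF
    exact hq_ne (hyq ▸ (QuotientAddGroup.eq_zero_iff y).mpr hyF)
  · intro a
    have hfix := hqfix (toC a)
    have : ql a q = q := congrArg Subtype.val hfix
    rw [← hyq] at this
    have h2 : (QuotientAddGroup.mk (lam a y) : A ⧸ F) = QuotientAddGroup.mk y := this
    have h3 : lam a y - y ∈ F := QuotientAddGroup.eq_iff_sub_mem.mp h2
    rwa [star_eq]

end LeftBrace

namespace LeftBrace

variable {A : Type*} [LeftBrace A]

def fixChain (X : AddSubgroup A) : ℕ → AddSubgroup A
  | 0 => ⊥
  | k + 1 =>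
    { carrier := {x | x ∈ X ∧ ∀ a, star a x ∈ fixChain X k}
      zero_mem' := ⟨X.zero_mem, fun a => by rw [star_zero]; exact zero_mem _⟩
      add_mem' := fun hx hy => ⟨X.add_mem hx.1 hy.1,
        fun a => by rw [star_add]; exact add_mem (hx.2 a) (hy.2 a)⟩
      neg_mem' := fun hx => ⟨X.neg_mem hx.1, fun a => by rw [star_neg]; exact neg_mem (hx.2 a)⟩ }

lemma mem_fixChain_succ {X : AddSubgroup A} {x : A} {k : ℕ} :
    x ∈ fixChain X (k+1) ↔ x ∈ X ∧ ∀ a, star a x ∈ fixChain X k := Iff.rfl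

lemma fixChain_le (X : AddSubgroup A) (k : ℕ) : fixChain X k ≤ X := by
  cases k with
  | zero => exact bot_le
  | succ k => exact fun x hx => hx.1

lemma fixChain_mono_succ (X : AddSubgroup A) (k : ℕ) : fixChain X k ≤ fixChain X (k+1) := by
  induction k with
  | zero => exact bot_le
  | succ k ih => exact fun x hx => ⟨hx.1, fun a => ih (hx.2 a)⟩

lemma fixChain_star (X : AddSubgroup A) (k : ℕ) (a : A) {x : A} (hx : x ∈ fixChain X k) :
    star a x ∈ fixChain X k := by
  cases k with
  | zero =>
    have hx0 : x = 0 := by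
      have : x ∈ (⊥ : AddSubgroup A) := hx
      rwa [AddSubgroup.mem_bot] at this
    have : star a x = 0 := by rw [hx0, star_zero]
    show star a x ∈ (⊥ : AddSubgroup A)
    rw [AddSubgroup.mem_bot]
    exact this
  | succ k => exact fixChain_mono_succ X k (hx.2 a)

lemma fixChain_eventually_top [Fintype A] {p n : ℕ} (hp : p.Prime)
    (hcard : Nat.card A = p ^ n) (X : AddSubgroup A)
    (hX : ∀ (a : A), ∀ x ∈ X, star a x ∈ X) :
    ∃ K, X ≤ fixChain X K := by
  have key : ∀ k, X ≤ fixChain X k ∨ k + 1 ≤ Nat.card (fixChain X k) := by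
    intro k
    induction k with
    | zero => right; rw [fixChain]; rw [AddSubgroup.card_bot]
    | succ k ih =>
      rcases ih with h | h
      · exact Or.inl (h.trans (fixChain_mono_succ X k))
      · by_cases hXF : X ≤ fixChain X (k+1)
        · exact Or.inl hXF
        · right
          have hXFk : ¬ X ≤ fixChain X k := fun hle => hXF (hle.trans (fixChain_mono_succ X k))
          obtain ⟨y, hyX, hyF, hstar⟩ := exists_almost_fixed hp hcard (fixChain X k) X
            (fun a x hx => fixChain_star X k a hx) hX hXFk
          have hlt : fixChain X k < fixChain X (k+1) := by
            refine lt_of_le_of_ne (fixChain_mono_succ X k) (fun heq => hyF ?_)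
            rw [heq]
            exact ⟨hyX, hstar⟩
          have hcardlt : Nat.card (fixChain X k) < Nat.card (fixChain X (k+1)) :=
            Set.Finite.card_lt_card (Set.toFinite ((fixChain X (k+1) : Set A)))
              (SetLike.coe_ssubset_coe.mpr hlt)
          omega
  rcases key (Nat.card A) with h | h
  · exact ⟨_, h⟩
  · exfalso
    have : Nat.card (fixChain X (Nat.card A)) ≤ Nat.card A :=
      Nat.card_le_card_of_injective _ Subtype.val_injective
    omega

end LeftBrace

namespace LeftBrace

variable {A : Type*} [LeftBrace A]

lemma subStar_top_le {X Y : AddSubgroup A} (h : ∀ (a : A), ∀ x ∈ X, star a x ∈ Y) :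
    subStar ⊤ X ≤ Y := by
  rw [subStar, subStarSet, AddSubgroup.closure_le]
  rintro _ ⟨a, -, b, hb, rfl⟩
  exact h a b hb

lemma coinv [Fintype A] {p n : ℕ} (hp : p.Prime) (hcard : Nat.card A = p ^ n)
    (X : AddSubgroup A) (hX : ∀ (a : A), ∀ x ∈ X, star a x ∈ X)
    (hfix : subStar ⊤ X = X) : X = ⊥ := by
  obtain ⟨K, hK⟩ := fixChain_eventually_top hp hcard X hX
  have down : ∀ k, X ≤ fixChain X k → X = ⊥ := by
    intro k
    induction k with
    | zero => intro h; exact le_bot_iff.mp h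
    | succ k ih =>
      intro h
      apply ih
      have h2 : subStar ⊤ X ≤ fixChain X k := subStar_top_le (fun a x hx => (h hx).2 a)
      rwa [hfix] at h2
  exact down K hK

lemma leftPow_succ_eq (m : ℕ) : leftPow A (m+1) = subStar ⊤ (leftPow A m) := rfl

lemma leftPow_bot_succ {m : ℕ} (h : leftPow A m = ⊥) : leftPow A (m+1) = ⊥ := by
  rw [leftPow_succ_eq, h]
  apply le_bot_iff.mp
  apply subStar_top_le
  intro a x hx
  rw [AddSubgroup.mem_bot] at hx ⊢
  rw [hx, star_zero]

/-- Rump's theorem: a left brace of order `p ^ n` satisfies `A ^ (n+1) = 0`. -/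
lemma rump [Fintype A] {p n : ℕ} (hp : p.Prime) (hcard : Nat.card A = p ^ n) :
    leftPow A n = ⊥ := by
  have step1 : ∀ m, leftPow A (m+1) = leftPow A m → leftPow A m = ⊥ := fun m h =>
    coinv hp hcard _ (fun a x hx => star_mem_leftPow a hx) (by rw [← leftPow_succ_eq]; exact h)
  have hdvd : ∀ m, Nat.card (leftPow A m) ∣ p ^ n := fun m =>
    hcard ▸ AddSubgroup.card_addSubgroup_dvd_card _
  have key : ∀ m, leftPow A m = ⊥ ∨ Nat.card (leftPow A m) * p ^ m ≤ p ^ n := by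
    intro m
    induction m with
    | zero =>
      right
      have : Nat.card (leftPow A 0) = p ^ n := by
        show Nat.card (⊤ : AddSubgroup A) = p ^ n
        rw [AddSubgroup.card_top, hcard]
      rw [this, pow_zero, mul_one]
    | succ m ih =>
      rcases ih with h | h
      · exact Or.inl (leftPow_bot_succ h)
      · by_cases heq : leftPow A (m+1) = leftPow A m
        · exact Or.inl (heq.trans (step1 m heq))
        · right
          have hlt : leftPow A (m+1) < leftPow A m := lt_of_le_of_ne (leftPow_succ_le m) heq
          have hcardlt : Nat.card (leftPow A (m+1)) < Nat.card (leftPow A m) :=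
            Set.Finite.card_lt_card (Set.toFinite ((leftPow A m : Set A)))
              (SetLike.coe_ssubset_coe.mpr hlt)
          obtain ⟨a1, -, ha1⟩ := (Nat.dvd_prime_pow hp).mp (hdvd (m+1))
          obtain ⟨a2, -, ha2⟩ := (Nat.dvd_prime_pow hp).mp (hdvd m)
          have hlt2 : a1 < a2 := by
            rw [ha1, ha2] at hcardlt
            exact (Nat.pow_lt_pow_iff_right hp.one_lt).mp hcardlt
          have : Nat.card (leftPow A (m+1)) * p ≤ Nat.card (leftPow A m) := by
            rw [ha1, ha2, ← pow_succ]
            exact Nat.pow_le_pow_right hp.pos hlt2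
          calc Nat.card (leftPow A (m+1)) * p ^ (m+1)
              = (Nat.card (leftPow A (m+1)) * p) * p ^ m := by ring
            _ ≤ Nat.card (leftPow A m) * p ^ m := Nat.mul_le_mul_right _ this
            _ ≤ p ^ n := h
  rcases key n with h | h
  · exact h
  · have hpos : 0 < p ^ n := pow_pos hp.pos n
    have hle : Nat.card (leftPow A n) ≤ 1 := by
      by_contra hgt
      push_neg at hgt
      have : 2 * p ^ n ≤ Nat.card (leftPow A n) * p ^ n := Nat.mul_le_mul_right _ hgt
      omega
    exact AddSubgroup.eq_bot_of_card_le _ hle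

lemma leftPow_eq_bot_of_ge [Fintype A] {p n : ℕ} (hp : p.Prime) (hcard : Nat.card A = p ^ n)
    {m : ℕ} (hm : n ≤ m) : leftPow A m = ⊥ :=
  le_bot_iff.mp ((rump hp hcard) ▸ leftPow_antitone hm)

end LeftBrace

namespace LeftBrace

variable {A : Type*} [LeftBrace A]

lemma choose_p_pow_dvd {p : ℕ} (hp : p.Prime) {k : ℕ} (hk1 : 1 ≤ k) (hkp : k < p) (i : ℕ) :
    p ^ i ∣ (p ^ i).choose k := by
  have hpos : 1 ≤ p ^ i := Nat.one_le_pow _ _ hp.pos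
  have key : p ^ i * (p ^ i - 1).choose (k - 1) = (p ^ i).choose k * k := by
    have h1 := Nat.add_one_mul_choose_eq (p ^ i - 1) (k - 1)
    rwa [Nat.sub_add_cancel hpos,
      Nat.sub_add_cancel hk1] at h1
  have hdvd : p ^ i ∣ (p ^ i).choose k * k := ⟨(p ^ i - 1).choose (k - 1), key.symm⟩
  have hcop : (Nat.Coprime (p ^ i) k) :=
    (hp.coprime_iff_not_dvd.mpr (Nat.not_dvd_of_pos_of_lt hk1 hkp)).pow_left i
  exact hcop.dvd_of_dvd_mul_right hdvd

lemma sum_smul_repr {p i : ℕ} (N : ℕ) (f : ℕ → ℕ) (g : ℕ → A) (P : AddSubgroup A)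
    (hg : ∀ k < N, g k ∈ P) (hdvd : ∀ k < N, p ^ i ∣ f k ∨ g k = 0) :
    ∃ b ∈ P, ∑ k ∈ Finset.range N, f k • g k = p ^ i • b := by
  refine ⟨∑ k ∈ Finset.range N, (f k / p ^ i) • g k, ?_, ?_⟩
  · exact AddSubgroup.sum_mem P (fun k hk => AddSubgroup.nsmul_mem P
      (hg k (Finset.mem_range.mp hk)) _)
  · rw [Finset.smul_sum]
    apply Finset.sum_congr rfl
    intro k hk
    rcases hdvd k (Finset.mem_range.mp hk) with h | h
    · rw [smul_smul, Nat.mul_div_cancel' h]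
    · rw [h]; simp

lemma main_sum_repr {p n : ℕ} (hp : p.Prime) (hpn : n + 1 < p) (i : ℕ)
    (hbot : leftPow A n = ⊥) (j : ℕ) (g : ℕ → A) (hg : ∀ k, g k ∈ leftPow A (j + k)) :
    ∃ c ∈ leftPow A j, ∑ k ∈ Finset.range (p ^ i), (p ^ i).choose (k+1) • g k = p ^ i • c := by
  apply sum_smul_repr
  · intro k _
    exact leftPow_antitone (Nat.le_add_right j k) (hg k)
  · intro k _
    by_cases hk : k + 1 ≤ n
    · exact Or.inl (choose_p_pow_dvd hp (Nat.le_add_left 1 k) (by omega) i)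
    · right
      have h1 : n ≤ j + k := by omega
      have h2 : g k ∈ leftPow A n := leftPow_antitone h1 (hg k)
      rw [hbot, AddSubgroup.mem_bot] at h2
      exact h2

lemma circPow_p_pow_eq {p n : ℕ} (hp : p.Prime) (hpn : n + 1 < p) (i : ℕ)
    (hbot : leftPow A n = ⊥) (a : A) :
    ∃ c : A, circPow a (p ^ i) = p ^ i • c := by
  obtain ⟨c, -, hc⟩ := main_sum_repr hp hpn i hbot 0 (fun k => iterStar a a k)
    (fun k => by
      have h := iterStar_mem (a := a) (b := a) (m := 0) trivial k
      simpa using h)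
  exact ⟨c, by rw [circPow_eq_sum, hc]⟩

lemma star_circPow_p_pow_eq {p n : ℕ} (hp : p.Prime) (hpn : n + 1 < p) (i : ℕ)
    (hbot : leftPow A n = ⊥) (a b : A) :
    ∃ c : A, star (circPow a (p ^ i)) b = p ^ i • c := by
  obtain ⟨c, -, hc⟩ := main_sum_repr hp hpn i hbot 0 (fun k => iterStar a (star a b) k)
    (fun k => by
      have h1 : star a b ∈ leftPow A 1 := star_mem_leftPow_succ a trivial
      have h2 := iterStar_mem (a := a) h1 k
      exact leftPow_antitone (by omega) h2)
  exact ⟨c, by rw [star_circPow_eq_sum, hc]⟩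

lemma sum_choose_split (M N : ℕ) (hMN : M = N + 1) (h : ℕ → A) :
    ∑ k ∈ Finset.range M, M.choose (k+1) • h k
    = M • h 0 + ∑ k ∈ Finset.range N, M.choose (k+1+1) • h (k+1) := by
  subst hMN
  rw [Finset.sum_range_succ' (fun k => (N+1).choose (k+1) • h k) N]
  simp only [Nat.zero_add, Nat.choose_one_right]
  rw [add_comm]

lemma circPow_p_pow_refined {p n : ℕ} (hp : p.Prime) (hpn : n + 1 < p) (i : ℕ)
    (hbot : leftPow A n = ⊥) {j : ℕ} {x : A} (hx : x ∈ leftPow A j) :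
    ∃ b ∈ leftPow A (j+1), circPow x (p ^ i) = p ^ i • x + p ^ i • b := by
  have hpos : 1 ≤ p ^ i := Nat.one_le_pow _ _ hp.pos
  obtain ⟨N, hN⟩ : ∃ N, p ^ i = N + 1 := ⟨p ^ i - 1, by omega⟩
  obtain ⟨b, hbmem, hb⟩ := sum_smul_repr (p := p) (i := i) N
    (fun k => (p ^ i).choose (k+1+1)) (fun k => iterStar x x (k+1)) (leftPow A (j+1))
    (fun k _ => leftPow_antitone (by omega) (iterStar_mem (a := x) hx (k+1)))
    (by
      intro k _
      by_cases hk : k + 2 ≤ n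
      · exact Or.inl (choose_p_pow_dvd hp (by omega) (by omega) i)
      · right
        have h2 : iterStar x x (k+1) ∈ leftPow A n :=
          leftPow_antitone (by omega) (iterStar_mem (a := x) hx (k+1))
        rwa [hbot, AddSubgroup.mem_bot] at h2)
  refine ⟨b, hbmem, ?_⟩
  rw [circPow_eq_sum, sum_choose_split (p ^ i) N hN (fun k => iterStar x x k)]
  rw [hb, iterStar_zero]

end LeftBrace

namespace LeftBrace

variable {A : Type*} [LeftBrace A]

lemma circ_eq_add_lam (a b : A) : circ a b = a + lam a b := by rw [lam_apply]; abel

lemma conj_eq (a j : A) : circ (circ a j) (inv a) = lam a j + lam a (star j (inv a)) := by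
  rw [circ_assoc]
  have h1 : circ j (inv a) = j + star j (inv a) + inv a := by rw [circ_eq]; abel
  rw [h1, circ_eq_add_lam, map_add, map_add]
  have h3 : lam a (inv a) = -a := by rw [lam_apply, circ_inv, zero_sub]
  rw [h3]; abel

end LeftBrace

open LeftBrace in
/-- in a left brace of cardinality `p^n` with `p > n+1` prime, the
subset `p^i·A` is an ideal, and it coincides with the subgroup of `(A,∘)`
generated by the `p^i`-th `∘`-powers. -/
theorem smul_isIdeal_eq_circPowers (p n : ℕ) (hp : p.Prime) (hpn : n + 1 < p)
    (A : Type*) [LeftBrace A] [Fintype A] (hcard : Nat.card A = p ^ n) (i : ℕ) :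
    IsIdeal {x : A | ∃ a : A, x = p ^ i • a} ∧
    {x : A | ∃ a : A, x = p ^ i • a} =
      {x : A | circClosure {y : A | ∃ a : A, y = circPow a (p ^ i)} x} := by
  have hbot : leftPow A n = ⊥ := rump hp hcard
  set I : Set A := {x | ∃ a, x = p ^ i • a} with hIdef
  set gens : Set A := {y : A | ∃ a : A, y = circPow a (p ^ i)} with hgensdef
  have hI0 : (0 : A) ∈ I := ⟨0, by rw [smul_zero]⟩
  have hIadd : ∀ x ∈ I, ∀ y ∈ I, x + y ∈ I := by
    rintro _ ⟨a, rfl⟩ _ ⟨b, rfl⟩; exact ⟨a + b, (smul_add _ a b).symm⟩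
  have hIneg : ∀ x ∈ I, -x ∈ I := by
    rintro _ ⟨a, rfl⟩; exact ⟨-a, (smul_neg _ a).symm⟩
  have hIstarL : ∀ (a : A), ∀ x ∈ I, star a x ∈ I := by
    rintro a _ ⟨b, rfl⟩; exact ⟨star a b, LeftBrace.star_nsmul a _ b⟩
  have hIcirc : ∀ x ∈ I, ∀ y ∈ I, circ x y ∈ I := by
    rintro x ⟨a, ha⟩ _ ⟨b, rfl⟩
    refine ⟨a + b + star x b, ?_⟩
    rw [circ_eq, LeftBrace.star_nsmul, smul_add, smul_add, ha]
  have hIcircPow : ∀ x ∈ I, ∀ m, circPow x m ∈ I := by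
    intro x hx m
    induction m with
    | zero => exact hI0
    | succ m ih => exact hIcirc x hx _ ih
  have hIinv : ∀ x ∈ I, inv x ∈ I := by
    intro x hx
    rw [inv_eq_circPow]
    exact hIcircPow x hx _
  have hGsub : ∀ x, circClosure gens x → x ∈ I := by
    intro x hx
    induction hx with
    | of y hy =>
      obtain ⟨a, rfl⟩ := hy
      obtain ⟨c, hc⟩ := circPow_p_pow_eq hp hpn i hbot a
      exact ⟨c, hc⟩
    | zero => exact hI0
    | mul u v hu hv ihu ihv => exact hIcirc u ihu v ihv
    | inv u hu ihu => exact hIinv u ihu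
  have hdown : ∀ d, ∀ x ∈ leftPow A (n - d), circClosure gens (p ^ i • x) := by
    intro d
    induction d with
    | zero =>
      intro x hx
      rw [Nat.sub_zero, hbot, AddSubgroup.mem_bot] at hx
      rw [hx, smul_zero]
      exact circClosure.zero
    | succ d ih =>
      intro x hx
      by_cases hdn : n ≤ d
      · exact ih x (by rwa [show n - d = n - (d+1) from by omega])
      · have hj : n - d = (n - (d+1)) + 1 := by omega
        obtain ⟨b, hbmem, hb⟩ := circPow_p_pow_refined hp hpn i hbot hx
        set u := circPow x (p ^ i) with hu
        set c := -(star (inv u) b + b) with hc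
        have hcmem : c ∈ leftPow A ((n - (d+1)) + 1) :=
          neg_mem (add_mem (star_mem_leftPow (inv u) hbmem) hbmem)
        have hcG : circClosure gens (p ^ i • c) := ih c (by rw [hj]; exact hcmem)
        have huG : circClosure gens u := circClosure.of u ⟨x, rfl⟩
        have keyeq : circ u (p ^ i • c) = p ^ i • x := by
          have h1 : (p ^ i) • c = lam (inv u) (-(p ^ i • b)) := by
            rw [map_neg, map_nsmul, hc, lam_eq_star_add, smul_neg]
          have h2 : ∀ z, circ u (lam (inv u) z) = u + z := by
            intro z
            rw [circ_eq_add_lam, lam_inv_cancel]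
          rw [h1, h2, hb]
          abel
        rw [← keyeq]
        exact circClosure.mul u _ huG hcG
  have hIG : ∀ x ∈ I, circClosure gens x := by
    rintro _ ⟨a, rfl⟩
    exact hdown n a (by rw [Nat.sub_self]; trivial)
  have hRight : ∀ g, circClosure gens g → ∀ b, star g b ∈ I := by
    intro g hg
    induction hg with
    | of y hy =>
      intro b
      obtain ⟨a, rfl⟩ := hy
      obtain ⟨c, hc⟩ := star_circPow_p_pow_eq hp hpn i hbot a b
      exact ⟨c, hc⟩
    | zero => intro b; rw [zero_star]; exact hI0
    | mul u v hu hv ihu ihv =>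
      intro b
      rw [circ_star]
      exact hIadd _ (hIadd _ (ihu _) _ (ihu b)) _ (ihv b)
    | inv u hu ihu =>
      intro b
      have h0 : star (circ u (inv u)) b = 0 := by rw [circ_inv, zero_star]
      rw [circ_star] at h0
      have h1 : star (inv u) b = -(star u (star (inv u) b) + star u b) :=
        eq_neg_of_add_eq_zero_right h0
      rw [h1]
      exact hIneg _ (hIadd _ (ihu _) _ (ihu b))
  have hset : I = {x | circClosure gens x} :=
    Set.ext (fun x => ⟨fun hx => hIG x hx, fun hx => hGsub x hx⟩)
  constructor
  · refine ⟨hI0, hIadd, hIneg, hIstarL, ?_, ?_⟩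
    · intro a j hj
      exact hRight j (hIG j hj) a
    · intro a j hj
      rw [conj_eq]
      apply hIadd
      · rw [lam_eq_star_add]; exact hIadd _ (hIstarL a j hj) _ hj
      · have hw : star j (inv a) ∈ I := hRight j (hIG j hj) (inv a)
        rw [lam_eq_star_add]
        exact hIadd _ (hIstarL a _ hw) _ hw
  · exact hset
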